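/- On the space of planar trees with k leaves at a common height ℓ ≥ 1 (ultrametric planar trees of height ℓ), the map τ ↦ (b_1(τ), ..., b_{k-1}(τ)) sending a tree to the generations of the most recent common ancestors of consecutive leaves is a bijection onto {0, 1, ..., ℓ−1}^{k-1}. -/

import Mathlib

open scoped Classical

noncomputable section

/-- A (finite) rooted planar tree: prefix-closed finite set of words over ℕ containing
the root, with consecutively indexed children. -/
def IsPlanarTree (τ : Finset (List ℕ)) : Prop :=
  [] ∈ τ ∧ (∀ v w : List ℕ, v <+: w → w ∈ τ → v ∈ τ) ∧
    ∀ v : List ℕ, ∃ d : ℕ, ∀ i : ℕ, v ++ [i] ∈ τ ↔ i < d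

/-- The leaves of a set of words: its maximal elements for the prefix order. -/
def leavesOf (s : Finset (List ℕ)) : Finset (List ℕ) :=
  s.filter fun v => ∀ w ∈ s, v <+: w → w = v

/-- Length of the longest common prefix of two words (generation of the MRCA). -/
def commonPrefixLen : List ℕ → List ℕ → ℕ
  | a :: v, b :: w => if a = b then commonPrefixLen v w + 1 else 0
  | _, _ => 0

/-- The `i`-th leaf of a tree with `k` leaves, in lexicographic order. -/
def leafVec (τ : Finset (List ℕ)) {k : ℕ} (h : (leavesOf τ).card = k) (i : Fin k) :
    List ℕ :=
  ((leavesOf τ).orderIsoOfFin h i : List ℕ)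

namespace UTB

/-! ### commonPrefixLen basics -/

lemma cpl_le_left : ∀ v w : List ℕ, commonPrefixLen v w ≤ v.length := by
  intro v w
  induction v generalizing w with
  | nil => simp [commonPrefixLen]
  | cons a v ih =>
    cases w with
    | nil => simp [commonPrefixLen]
    | cons c w =>
      simp only [commonPrefixLen]
      split
      · simpa using ih w
      · simp

lemma take_cpl : ∀ v w : List ℕ,
    v.take (commonPrefixLen v w) = w.take (commonPrefixLen v w) := by
  intro v w
  induction v generalizing w with
  | nil => simp [commonPrefixLen]
  | cons a v ih =>
    cases w with
    | nil => simp [commonPrefixLen]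
    | cons c w =>
      simp only [commonPrefixLen]
      split
      · subst_vars; simp [List.take_succ_cons, ih w]
      · simp

lemma getD_cpl_ne : ∀ v w : List ℕ, commonPrefixLen v w < v.length →
    commonPrefixLen v w < w.length →
    v.getD (commonPrefixLen v w) 0 ≠ w.getD (commonPrefixLen v w) 0 := by
  intro v w
  induction v generalizing w with
  | nil => simp
  | cons a v ih =>
    cases w with
    | nil => simp
    | cons c w =>
      simp only [commonPrefixLen]
      split
      · intro h1 h2
        simp only [List.getD_cons_succ]
        exact ih w (by simpa using h1) (by simpa using h2)
      · intro _ _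
        simpa using ‹¬ a = c›

lemma cpl_ge_of_take : ∀ (m : ℕ) (v w : List ℕ), v.take m = w.take m →
    m ≤ v.length → m ≤ commonPrefixLen v w := by
  intro m
  induction m with
  | zero => intro v w _ _; exact Nat.zero_le _
  | succ m ih =>
    intro v w h hm
    cases v with
    | nil => simp at hm
    | cons a v =>
      cases w with
      | nil => simp [List.take_succ_cons] at h
      | cons c w =>
        simp only [List.take_succ_cons, List.cons.injEq] at h
        simp only [commonPrefixLen, h.1, if_true]
        have := ih v w h.2 (by simpa using hm)
        omega

lemma prefix_of_cpl_eq_length : ∀ v w : List ℕ, v.length ≤ commonPrefixLen v w → v <+: w := by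
  intro v w
  induction v generalizing w with
  | nil => simp
  | cons a v ih =>
    cases w with
    | nil => simp [commonPrefixLen]
    | cons c w =>
      simp only [commonPrefixLen]
      split
      · intro h
        subst_vars
        exact List.cons_prefix_cons.mpr ⟨rfl, ih w (by simpa using h)⟩
      · simp

lemma cpl_lt_of_ne {v w : List ℕ} (hlen : v.length = w.length) (hne : v ≠ w) :
    commonPrefixLen v w < v.length := by
  rcases lt_or_eq_of_le (cpl_le_left v w) with h | h
  · exact h
  · exact absurd (List.IsPrefix.eq_of_length (prefix_of_cpl_eq_length v w h.ge) hlen) hne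

lemma cpl_le_right : ∀ v w : List ℕ, commonPrefixLen v w ≤ w.length := by
  intro v w
  induction v generalizing w with
  | nil => simp [commonPrefixLen]
  | cons a v ih =>
    cases w with
    | nil => simp [commonPrefixLen]
    | cons c w =>
      simp only [commonPrefixLen]
      split
      · simpa using ih w
      · simp

lemma getD_take_of_lt {v : List ℕ} {m c : ℕ} (h : m < c) (hm : m < v.length) :
    (v.take c).getD m 0 = v.getD m 0 := by
  rw [List.getD_eq_getElem _ _ (by simp; omega), List.getD_eq_getElem _ _ hm]
  exact List.getElem_take

lemma cpl_eq_of {m : ℕ} {v w : List ℕ} (h1 : v.take m = w.take m)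
    (h2 : v.getD m 0 ≠ w.getD m 0) (hm : m < v.length) : commonPrefixLen v w = m := by
  have h1' : m ≤ commonPrefixLen v w := cpl_ge_of_take m v w h1 hm.le
  rcases lt_or_eq_of_le h1' with h | h
  · exfalso
    have hmw : m < w.length := lt_of_lt_of_le h (cpl_le_right v w)
    have hvw := take_cpl v w
    apply h2
    calc v.getD m 0 = (v.take (commonPrefixLen v w)).getD m 0 :=
          (getD_take_of_lt h hm).symm
      _ = (w.take (commonPrefixLen v w)).getD m 0 := by rw [hvw]
      _ = w.getD m 0 := getD_take_of_lt h hmw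
  · omega

/-! ### lex order -/

lemma lt_of_take_get {m : ℕ} {v w : List ℕ} (h : v.take m = w.take m)
    (hv : m < v.length) (hw : m < w.length) (hlt : v.getD m 0 < w.getD m 0) : v < w := by
  induction m generalizing v w with
  | zero =>
    cases v with
    | nil => simp at hv
    | cons a v =>
      cases w with
      | nil => simp at hw
      | cons c w =>
        simp only [List.getD_cons_zero] at hlt
        exact List.Lex.rel hlt
  | succ m ih =>
    cases v with
    | nil => simp at hv
    | cons a v =>
      cases w with
      | nil => simp at hw
      | cons c w =>
        simp only [List.take_succ_cons, List.cons.injEq] at h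
        obtain ⟨rfl, h⟩ := h
        exact List.Lex.cons (ih h (by simpa using hv) (by simpa using hw)
          (by simpa using hlt))

lemma getD_lt_of_lt {v w : List ℕ} (hlen : v.length = w.length) (hlt : v < w) :
    commonPrefixLen v w < v.length ∧
      v.getD (commonPrefixLen v w) 0 < w.getD (commonPrefixLen v w) 0 := by
  have hne : v ≠ w := ne_of_lt hlt
  have hm := cpl_lt_of_ne hlen hne
  have hmw : commonPrefixLen v w < w.length := hlen ▸ hm
  have hne2 := getD_cpl_ne v w hm hmw
  refine ⟨hm, ?_⟩
  rcases lt_trichotomy (v.getD (commonPrefixLen v w) 0) (w.getD (commonPrefixLen v w) 0)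
    with h | h | h
  · exact h
  · exact absurd h hne2
  · exact absurd (lt_of_take_get (take_cpl v w).symm hmw hm h) (lt_asymm hlt)

/-! ### zeros -/

def zeros (n : ℕ) : List ℕ := List.replicate n 0

@[simp] lemma zeros_length (n : ℕ) : (zeros n).length = n := List.length_replicate

lemma getD_zeros (n p : ℕ) : (zeros n).getD p 0 = 0 := by
  rcases lt_or_ge p n with h | h
  · rw [List.getD_eq_getElem _ _ (by simpa using h)]
    simp [zeros]
  · exact List.getD_eq_default _ _ (by simpa using h)

lemma zeros_le {w : List ℕ} (h : w.length = n) : zeros n ≤ w := by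
  rcases eq_or_ne (zeros n) w with heq | hne
  · exact heq.le
  · refine le_of_lt ?_
    have hlen : (zeros n).length = w.length := by simp [h]
    have hm := cpl_lt_of_ne hlen hne
    have hmw : commonPrefixLen (zeros n) w < w.length := hlen ▸ hm
    have hne2 := getD_cpl_ne _ _ hm hmw
    refine lt_of_take_get (take_cpl _ _) hm hmw ?_
    rw [getD_zeros] at hne2 ⊢
    omega

/-! ### next leaf -/

def nxt (ℓ : ℕ) (v : List ℕ) (m : ℕ) : List ℕ :=
  v.take m ++ (v.getD m 0 + 1) :: zeros (ℓ - m - 1)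

section nxt
variable {ℓ m : ℕ} {v : List ℕ} (hv : v.length = ℓ) (hm : m < ℓ)
include hv hm

lemma nxt_length : (nxt ℓ v m).length = ℓ := by
  simp [nxt, hv]
  omega

lemma take_nxt : (nxt ℓ v m).take m = v.take m := by
  rw [nxt, List.take_append_of_le_length (by simp [hv]; omega), List.take_take]
  simp

lemma getD_nxt_self : (nxt ℓ v m).getD m 0 = v.getD m 0 + 1 := by
  rw [nxt, List.getD_append_right _ _ _ _ (by simp)]
  have : (v.take m).length = m := by simp [hv]; omega
  rw [this]
  simp

lemma getD_nxt_ge {p : ℕ} (hp : m + 1 ≤ p) : (nxt ℓ v m).getD p 0 = 0 := by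
  rw [nxt, List.getD_append_right _ _ _ _ (by simp [hv]; omega)]
  have : p - (v.take m).length = (p - (v.take m).length - 1) + 1 := by
    simp [hv]; omega
  rw [this, List.getD_cons_succ, getD_zeros]

lemma take_succ_nxt : (nxt ℓ v m).take (m+1) = v.take m ++ [v.getD m 0 + 1] := by
  rw [nxt]
  have h1 : (v.take m).length = m := by simp [hv]; omega
  rw [show m + 1 = (v.take m).length + ([v.getD m 0 + 1]).length by simp [h1]]
  rw [show v.take m ++ (v.getD m 0 + 1) :: zeros (ℓ - m - 1)
      = (v.take m ++ [v.getD m 0 + 1]) ++ zeros (ℓ - m - 1) by simp]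
  rw [List.take_append_of_le_length (by simp)]
  simp

lemma lt_nxt : v < nxt ℓ v m := by
  refine lt_of_take_get (take_nxt hv hm).symm (by omega) ?_ ?_
  · rw [nxt_length hv hm]; omega
  · rw [getD_nxt_self hv hm]; omega

lemma cpl_nxt : commonPrefixLen v (nxt ℓ v m) = m := by
  refine cpl_eq_of (take_nxt hv hm).symm ?_ (by omega)
  rw [getD_nxt_self hv hm]; omega

end nxt

/-! ### leaf sequences -/

def lseq (ℓ : ℕ) (b : ℕ → ℕ) : ℕ → List ℕ
  | 0 => zeros ℓ
  | i+1 => nxt ℓ (lseq ℓ b i) (b i)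

section lseq
variable {ℓ : ℕ} {b : ℕ → ℕ} (hb : ∀ i, b i < ℓ)
include hb

lemma lseq_length (i : ℕ) : (lseq ℓ b i).length = ℓ := by
  induction i with
  | zero => simp [lseq]
  | succ i ih => exact nxt_length ih (hb i)

lemma lseq_strictMono : StrictMono (lseq ℓ b) := by
  have hstep : ∀ i, lseq ℓ b i < lseq ℓ b (i+1) := fun i =>
    lt_nxt (lseq_length hb i) (hb i)
  exact strictMono_nat_of_lt_succ hstep

lemma cpl_lseq (i : ℕ) : commonPrefixLen (lseq ℓ b i) (lseq ℓ b (i+1)) = b i := by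
  exact cpl_nxt (lseq_length hb i) (hb i)

end lseq

/-! ### trees from leaves -/

def prefixes (v : List ℕ) : Finset (List ℕ) :=
  (Finset.range (v.length + 1)).image (v.take ·)

lemma mem_prefixes {u v : List ℕ} : u ∈ prefixes v ↔ u <+: v := by
  constructor
  · intro h
    simp only [prefixes, Finset.mem_image, Finset.mem_range] at h
    obtain ⟨n, _, rfl⟩ := h
    exact List.take_prefix n v
  · intro h
    simp only [prefixes, Finset.mem_image, Finset.mem_range]
    exact ⟨u.length, by have := h.length_le; omega, (List.prefix_iff_eq_take.mp h).symm⟩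

def treeOf (L : Finset (List ℕ)) : Finset (List ℕ) := L.biUnion prefixes

lemma mem_treeOf {L : Finset (List ℕ)} {u : List ℕ} :
    u ∈ treeOf L ↔ ∃ v ∈ L, u <+: v := by
  simp only [treeOf, Finset.mem_biUnion, mem_prefixes]

lemma exists_leaf_ext {s : Finset (List ℕ)} {v : List ℕ} (hv : v ∈ s) :
    ∃ w ∈ leavesOf s, v <+: w := by
  obtain ⟨w, hw, hmax⟩ := (s.filter fun u => v <+: u).exists_max_image
    (fun u => u.length) ⟨v, by simp [hv]⟩
  simp only [Finset.mem_filter] at hw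
  refine ⟨w, ?_, hw.2⟩
  simp only [leavesOf, Finset.mem_filter]
  refine ⟨hw.1, fun u hu hwu => ?_⟩
  have hul : u.length ≤ w.length := hmax u (by simp [hu, hw.2.trans hwu])
  exact (List.IsPrefix.eq_of_length hwu (le_antisymm hwu.length_le hul)).symm

lemma tree_eq_treeOf_leaves {τ : Finset (List ℕ)}
    (hcl : ∀ v w : List ℕ, v <+: w → w ∈ τ → v ∈ τ) : τ = treeOf (leavesOf τ) := by
  ext u
  rw [mem_treeOf]
  constructor
  · exact fun hu => exists_leaf_ext hu
  · rintro ⟨v, hv, huv⟩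
    exact hcl u v huv (Finset.mem_filter.mp hv).1

lemma leavesOf_treeOf {ℓ : ℕ} {L : Finset (List ℕ)} (hL : ∀ v ∈ L, v.length = ℓ) :
    leavesOf (treeOf L) = L := by
  ext u
  simp only [leavesOf, Finset.mem_filter, mem_treeOf]
  constructor
  · rintro ⟨⟨v, hv, huv⟩, hmax⟩
    have := hmax v ⟨v, hv, List.prefix_refl v⟩ huv
    exact this ▸ hv
  · intro hu
    refine ⟨⟨u, hu, List.prefix_refl u⟩, ?_⟩
    rintro w ⟨x, hx, hwx⟩ huw
    have h1 : u.length ≤ w.length := huw.length_le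
    have h2 : w.length ≤ x.length := hwx.length_le
    rw [hL u hu] at h1
    rw [hL x hx] at h2
    have hux : u <+: x := huw.trans hwx
    have : u = x := List.IsPrefix.eq_of_length hux (by rw [hL u hu, hL x hx])
    subst this
    exact (List.IsPrefix.eq_of_length huw (le_antisymm huw.length_le (by have h3 := hL u hu; omega))).symm


/-! ### prefix helper lemmas -/

lemma getD_of_prefix {u w : List ℕ} {p : ℕ} (h : u <+: w) (hp : p < u.length) :
    u.getD p 0 = w.getD p 0 := by
  rw [List.getD_eq_getElem _ _ hp,
    List.getD_eq_getElem _ _ (lt_of_lt_of_le hp h.length_le)]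
  exact List.IsPrefix.getElem h hp

lemma take_succ_getD {w : List ℕ} {m : ℕ} (hm : m < w.length) :
    w.take (m+1) = w.take m ++ [w.getD m 0] := by
  rw [List.take_succ, List.getD_eq_getElem _ _ hm]
  simp [List.getElem?_eq_getElem hm]

lemma prefix_snoc_of_lt {u w : List ℕ} (h : u <+: w) (hlt : u.length < w.length) :
    u ++ [w.getD u.length 0] <+: w := by
  have h1 : u = w.take u.length := List.prefix_iff_eq_take.mp h
  have h2 : u ++ [w.getD u.length 0] = w.take (u.length + 1) := by
    rw [take_succ_getD hlt, ← h1]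
  rw [h2]
  exact List.take_prefix _ _

/-! ### the constructed tree -/

section constructed
variable {k ℓ : ℕ} {b : ℕ → ℕ} (hb : ∀ i, b i < ℓ)
include hb

lemma succ_closed : ∀ (j : ℕ) (c : ℕ) (v : List ℕ),
    v ++ [c+1] <+: lseq ℓ b j → ∃ j' ≤ j, v ++ [c] <+: lseq ℓ b j' := by
  intro j
  induction j with
  | zero =>
    intro c v h
    exfalso
    have hp : v.length < (v ++ [c+1]).length := by simp
    have := getD_of_prefix h hp
    rw [List.getD_append_right _ _ _ _ le_rfl] at this
    simp only [Nat.sub_self, List.getD_cons_zero] at this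
    rw [show lseq ℓ b 0 = zeros ℓ from rfl, getD_zeros] at this
    omega
  | succ j ih =>
    intro c v h
    set w := lseq ℓ b j with hw
    have hwlen : w.length = ℓ := lseq_length hb j
    have hm : b j < ℓ := hb j
    rcases lt_trichotomy v.length (b j) with hp | hp | hp
    · -- strictly inside the copied prefix
      have h1 : v ++ [c+1] <+: (lseq ℓ b (j+1)).take (b j) :=
        List.prefix_take_iff.mpr ⟨h, by simp; omega⟩
      rw [show lseq ℓ b (j+1) = nxt ℓ w (b j) from rfl, take_nxt hwlen hm] at h1
      have h2 : v ++ [c+1] <+: w := h1.trans (List.take_prefix _ _)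
      obtain ⟨j', hj', hj'2⟩ := ih c v h2
      exact ⟨j', by omega, hj'2⟩
    · -- at the branch point
      have hgd : (v ++ [c+1]).getD v.length 0 = (lseq ℓ b (j+1)).getD v.length 0 :=
        getD_of_prefix h (by simp)
      rw [List.getD_append_right _ _ _ _ le_rfl] at hgd
      simp only [Nat.sub_self, List.getD_cons_zero] at hgd
      rw [hp, show lseq ℓ b (j+1) = nxt ℓ w (b j) from rfl,
        getD_nxt_self hwlen hm] at hgd
      have hc : c = w.getD (b j) 0 := by omega
      have hv : v = w.take (b j) := by
        have h1 : v <+: lseq ℓ b (j+1) := (List.prefix_append v [c+1]).trans h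
        have h2 : v = (lseq ℓ b (j+1)).take v.length := List.prefix_iff_eq_take.mp h1
        rw [h2, hp, show lseq ℓ b (j+1) = nxt ℓ w (b j) from rfl, take_nxt hwlen hm]
      refine ⟨j, Nat.le_succ j, ?_⟩
      rw [hv, hc, ← take_succ_getD (by omega)]
      exact List.take_prefix _ _
    · -- beyond the branch point: letter must be 0, contradiction
      exfalso
      have hgd : (v ++ [c+1]).getD v.length 0 = (lseq ℓ b (j+1)).getD v.length 0 :=
        getD_of_prefix h (by simp)
      rw [List.getD_append_right _ _ _ _ le_rfl] at hgd
      simp only [Nat.sub_self, List.getD_cons_zero] at hgd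
      rw [show lseq ℓ b (j+1) = nxt ℓ w (b j) from rfl,
        getD_nxt_ge hwlen hm (by omega)] at hgd
      omega

variable (hk : 1 ≤ k)
include hk

lemma planar_Ltree : IsPlanarTree (treeOf ((Finset.range k).image (lseq ℓ b))) := by
  refine ⟨?_, ?_, ?_⟩
  · rw [mem_treeOf]
    exact ⟨lseq ℓ b 0, Finset.mem_image.mpr ⟨0, by simp; omega, rfl⟩,
      List.nil_prefix⟩
  · intro v w hvw hw
    rw [mem_treeOf] at hw ⊢
    obtain ⟨x, hx, hwx⟩ := hw
    exact ⟨x, hx, hvw.trans hwx⟩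
  · intro v
    set P : ℕ → Prop := fun i => v ++ [i] ∈ treeOf ((Finset.range k).image (lseq ℓ b))
      with hP
    have hdown : ∀ c, P (c+1) → P c := by
      intro c hc
      rw [hP, mem_treeOf] at hc ⊢
      obtain ⟨x, hx, hcx⟩ := hc
      obtain ⟨j, hj, rfl⟩ := Finset.mem_image.mp hx
      simp only [Finset.mem_range] at hj
      obtain ⟨j', hj', hj'2⟩ := succ_closed hb j c v hcx
      exact ⟨lseq ℓ b j', Finset.mem_image.mpr ⟨j', by simp; omega, rfl⟩, hj'2⟩
    have hnotall : ∃ B, ¬ P B := by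
      by_contra hall
      push_neg at hall
      have hinj : Function.Injective (fun i : ℕ => v ++ [i]) := by
        intro a b hab
        simpa using hab
      exact absurd (Set.infinite_of_injective_forall_mem hinj
        (fun i => hall i : ∀ i : ℕ, (v ++ [i]) ∈
          (↑(treeOf ((Finset.range k).image (lseq ℓ b))) : Set (List ℕ))))
        (Finset.finite_toSet _).not_infinite
    classical
    have hex : ∃ B, ¬ P B := hnotall
    refine ⟨Nat.find hex, fun i => ?_⟩
    constructor
    · intro hi
      by_contra hlt
      push_neg at hlt
      have : ¬ P i := by
        have hmono : ∀ a b', a ≤ b' → P b' → P a := by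
          intro a b' hab hpb
          induction b' with
          | zero => exact (Nat.le_zero.mp hab) ▸ hpb
          | succ n ihn =>
            rcases Nat.lt_or_ge a (n+1) with h' | h'
            · exact ihn (by omega) (hdown n hpb)
            · exact (by omega : a = n+1) ▸ hpb
        exact fun hp => Nat.find_spec hex (hmono _ _ hlt hp)
      exact this hi
    · intro hi
      exact not_not.mp (Nat.find_min hex hi)

omit hk in
lemma leaves_Ltree :
    leavesOf (treeOf ((Finset.range k).image (lseq ℓ b)))
      = (Finset.range k).image (lseq ℓ b) := by
  refine leavesOf_treeOf (ℓ := ℓ) ?_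
  intro v hv
  obtain ⟨j, _, rfl⟩ := Finset.mem_image.mp hv
  exact lseq_length hb j

omit hk in
lemma card_leaves_Ltree :
    (leavesOf (treeOf ((Finset.range k).image (lseq ℓ b)))).card = k := by
  rw [leaves_Ltree (k := k) hb, Finset.card_image_of_injective _ (lseq_strictMono hb).injective,
    Finset.card_range]

omit hk in
lemma len_leaves_Ltree :
    ∀ v ∈ leavesOf (treeOf ((Finset.range k).image (lseq ℓ b))), v.length = ℓ := by
  rw [leaves_Ltree (k := k) hb]
  intro v hv
  obtain ⟨j, _, rfl⟩ := Finset.mem_image.mp hv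
  exact lseq_length hb j

omit hk in
lemma leafVec_Ltree (i : Fin k) :
    leafVec (treeOf ((Finset.range k).image (lseq ℓ b))) (card_leaves_Ltree (k := k) hb) i
      = lseq ℓ b i := by
  have hmem : ∀ i : Fin k, lseq ℓ b i ∈
      leavesOf (treeOf ((Finset.range k).image (lseq ℓ b))) := by
    intro i
    rw [leaves_Ltree (k := k) hb]
    exact Finset.mem_image.mpr ⟨i, Finset.mem_range.mpr i.2, rfl⟩
  have hsm : StrictMono (fun i : Fin k => lseq ℓ b i) := by
    intro i j hij
    exact lseq_strictMono hb hij
  have := Finset.orderEmbOfFin_unique (card_leaves_Ltree (k := k) hb) hmem hsm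
  rw [leafVec, Finset.coe_orderIsoOfFin_apply, ← this]

end constructed

/-! ### analysis of an arbitrary ultrametric planar tree -/

section converse
variable {k ℓ : ℕ} {τ : Finset (List ℕ)} (hτ : IsPlanarTree τ)
  (hcard : (leavesOf τ).card = k) (hlen : ∀ v ∈ leavesOf τ, v.length = ℓ)

lemma leavesOf_subset : leavesOf τ ⊆ τ := Finset.filter_subset _ _

include hcard in
lemma lv_mem (i : Fin k) : leafVec τ hcard i ∈ leavesOf τ := by
  rw [leafVec, Finset.coe_orderIsoOfFin_apply]
  exact Finset.orderEmbOfFin_mem _ hcard i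

include hcard in
lemma lv_strictMono : StrictMono (leafVec τ hcard) := by
  intro i j hij
  simp only [leafVec, Finset.coe_orderIsoOfFin_apply]
  exact ((leavesOf τ).orderEmbOfFin hcard).strictMono hij

include hcard in
lemma lv_surj {w : List ℕ} (hw : w ∈ leavesOf τ) : ∃ i, leafVec τ hcard i = w := by
  have : w ∈ Set.range ((leavesOf τ).orderEmbOfFin hcard) := by
    rw [Finset.range_orderEmbOfFin]
    exact hw
  obtain ⟨i, hi⟩ := this
  exact ⟨i, by rw [leafVec, Finset.coe_orderIsoOfFin_apply, hi]⟩

include hcard hlen in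
lemma lv_length (i : Fin k) : (leafVec τ hcard i).length = ℓ :=
  hlen _ (lv_mem hcard i)

include hτ hlen in
lemma mem_child_zero {v : List ℕ} (hv : v ∈ τ) (hvl : v.length < ℓ) : v ++ [0] ∈ τ := by
  obtain ⟨w, hw, hvw⟩ := exists_leaf_ext hv
  have hwl : w.length = ℓ := hlen w hw
  have hvwl : v.length < w.length := by omega
  have hsn : v ++ [w.getD v.length 0] ∈ τ :=
    hτ.2.1 _ w (prefix_snoc_of_lt hvw hvwl) (leavesOf_subset hw)
  obtain ⟨d, hd⟩ := hτ.2.2 v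
  have : w.getD v.length 0 < d := (hd _).mp hsn
  exact (hd 0).mpr (by omega)

include hτ hlen in
lemma mem_append_zeros {v : List ℕ} (hv : v ∈ τ) (hvl : v.length ≤ ℓ) :
    v ++ zeros (ℓ - v.length) ∈ τ := by
  suffices H : ∀ (t : ℕ) (v : List ℕ), v ∈ τ → v.length + t ≤ ℓ → v ++ zeros t ∈ τ by
    exact H _ v hv (by omega)
  intro t
  induction t with
  | zero => intro v hv _; simpa [zeros] using hv
  | succ t iht =>
    intro v hv hvl'
    have h0 : v ++ [0] ∈ τ := mem_child_zero hτ hlen hv (by omega)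
    have := iht (v ++ [0]) h0 (by simp; omega)
    rw [show v ++ zeros (t+1) = (v ++ [0]) ++ zeros t by
      simp [zeros, List.replicate_succ]]
    exact this

include hlen in
lemma leaf_of_len {v : List ℕ} (hv : v ∈ τ) (hvl : v.length = ℓ) : v ∈ leavesOf τ := by
  simp only [leavesOf, Finset.mem_filter]
  refine ⟨hv, fun u hu hvu => ?_⟩
  obtain ⟨w, hw, huw⟩ := exists_leaf_ext hu
  have : u.length ≤ ℓ := (hlen w hw) ▸ huw.length_le
  exact (List.IsPrefix.eq_of_length hvu (by have := hvu.length_le; omega)).symm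

include hτ hcard hlen in
lemma lv_zero (hk : 0 < k) : leafVec τ hcard ⟨0, hk⟩ = zeros ℓ := by
  have hz : zeros ℓ ∈ leavesOf τ := by
    have := mem_append_zeros hτ hlen hτ.1 (by simp)
    simp only [List.nil_append, List.length_nil, Nat.sub_zero] at this
    exact leaf_of_len hlen this (by simp)
  obtain ⟨j, hj⟩ := lv_surj hcard hz
  have h1 : leafVec τ hcard ⟨0, hk⟩ ≤ leafVec τ hcard j :=
    (lv_strictMono hcard).monotone (by simp [Fin.le_def])
  have h2 : zeros ℓ ≤ leafVec τ hcard ⟨0, hk⟩ :=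
    zeros_le (lv_length hcard hlen _)
  rw [hj] at h1
  exact le_antisymm h1 h2

include hcard hlen in
lemma cpl_lv_lt {i : ℕ} (hi : i + 1 < k) :
    commonPrefixLen (leafVec τ hcard ⟨i, by omega⟩) (leafVec τ hcard ⟨i+1, hi⟩) < ℓ := by
  have hv : leafVec τ hcard ⟨i, by omega⟩ < leafVec τ hcard ⟨i+1, hi⟩ :=
    lv_strictMono hcard (by simp [Fin.lt_def])
  have h := getD_lt_of_lt (by rw [lv_length hcard hlen, lv_length hcard hlen]) hv
  rw [lv_length hcard hlen] at h
  exact h.1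

include hτ hcard hlen in
lemma lv_succ {i : ℕ} (hi : i + 1 < k) :
    leafVec τ hcard ⟨i+1, hi⟩ = nxt ℓ (leafVec τ hcard ⟨i, by omega⟩)
      (commonPrefixLen (leafVec τ hcard ⟨i, by omega⟩) (leafVec τ hcard ⟨i+1, hi⟩)) := by
  set v := leafVec τ hcard ⟨i, by omega⟩ with hvdef
  set w := leafVec τ hcard ⟨i+1, hi⟩ with hwdef
  have hvl : v.length = ℓ := lv_length hcard hlen _
  have hwl : w.length = ℓ := lv_length hcard hlen _
  have hvw : v < w := lv_strictMono hcard (by simp [Fin.lt_def])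
  set m := commonPrefixLen v w with hmdef
  obtain ⟨hm, hgd⟩ := getD_lt_of_lt (by omega) hvw
  rw [← hmdef] at hm hgd
  rw [hvl] at hm
  have htake : v.take m = w.take m := take_cpl v w
  -- the candidate next leaf is in the tree
  have hwmem : w ∈ τ := leavesOf_subset (lv_mem hcard _)
  have hstep : v.take m ++ [w.getD m 0] ∈ τ := by
    have h1 : w.take (m+1) ∈ τ := hτ.2.1 _ w (List.take_prefix _ _) hwmem
    rwa [take_succ_getD (by omega), ← htake] at h1
  obtain ⟨d, hd⟩ := hτ.2.2 (v.take m)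
  have hnode : v.take m ++ [v.getD m 0 + 1] ∈ τ := by
    have := (hd _).mp hstep
    exact (hd _).mpr (by omega)
  have hnodelen : (v.take m ++ [v.getD m 0 + 1]).length = m + 1 := by
    simp [hvl]; omega
  have hcmem : nxt ℓ v m ∈ τ := by
    have := mem_append_zeros hτ hlen hnode (by rw [hnodelen]; omega)
    rw [hnodelen] at this
    rw [show nxt ℓ v m = (v.take m ++ [v.getD m 0 + 1]) ++ zeros (ℓ - (m+1)) by
      simp [nxt, Nat.sub_sub]]
    exact this
  have hcleaf : nxt ℓ v m ∈ leavesOf τ :=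
    leaf_of_len hlen hcmem (nxt_length hvl hm)
  -- v < nxt ≤ w
  have hvc : v < nxt ℓ v m := lt_nxt hvl hm
  have hcw : nxt ℓ v m ≤ w := by
    rcases eq_or_ne (nxt ℓ v m) w with heq | hne
    · exact heq.le
    · rcases lt_or_eq_of_le (by omega : v.getD m 0 + 1 ≤ w.getD m 0) with hlt2 | heq2
      · refine le_of_lt (lt_of_take_get (m := m) ?_ ?_ (by omega) ?_)
        · rw [take_nxt hvl hm, htake]
        · rw [nxt_length hvl hm]; omega
        · rw [getD_nxt_self hvl hm]; omega
      · have htk : (nxt ℓ v m).take (m+1) = w.take (m+1) := by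
          rw [take_succ_nxt hvl hm, take_succ_getD (by omega), ← htake, heq2]
        have hp : m + 1 ≤ commonPrefixLen (nxt ℓ v m) w :=
          cpl_ge_of_take _ _ _ htk (by rw [nxt_length hvl hm]; omega)
        set p := commonPrefixLen (nxt ℓ v m) w with hpdef
        have hplt : p < (nxt ℓ v m).length :=
          cpl_lt_of_ne (by rw [nxt_length hvl hm, hwl]) hne
        have hpw : p < w.length := by rw [hwl]; rw [nxt_length hvl hm] at hplt; omega
        have hne2 := getD_cpl_ne _ _ hplt hpw
        have hc0 : (nxt ℓ v m).getD p 0 = 0 := getD_nxt_ge hvl hm hp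
        refine le_of_lt (lt_of_take_get (take_cpl _ _) hplt hpw ?_)
        rw [hc0] at hne2 ⊢
        omega
  -- conclude
  obtain ⟨j, hj⟩ := lv_surj hcard hcleaf
  have hij : (⟨i, by omega⟩ : Fin k) < j := by
    rw [← (lv_strictMono hcard).lt_iff_lt, hj]
    exact hvc
  have hle : (⟨i+1, hi⟩ : Fin k) ≤ j := by
    rw [Fin.le_def]
    rw [Fin.lt_def] at hij
    simpa using hij
  have : w ≤ nxt ℓ v m := by
    rw [← hj]
    exact (lv_strictMono hcard).monotone hle
  exact le_antisymm this hcw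

end converse


/-! ### the b-vector of a tree, and reconstruction -/

def bfun (k ℓ : ℕ) (τ : Finset (List ℕ)) (hcard : (leavesOf τ).card = k) : ℕ → ℕ :=
  fun i => if h : i < k - 1 then
    commonPrefixLen (leafVec τ hcard ⟨i, by omega⟩) (leafVec τ hcard ⟨i+1, by omega⟩)
  else 0

section converse2
variable {k ℓ : ℕ} {τ : Finset (List ℕ)} (hτ : IsPlanarTree τ)
  (hcard : (leavesOf τ).card = k) (hlen : ∀ v ∈ leavesOf τ, v.length = ℓ)
  (hℓ : 1 ≤ ℓ)

include hcard hlen hℓ in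
lemma bfun_lt : ∀ i, bfun k ℓ τ hcard i < ℓ := by
  intro i
  rw [bfun]
  split
  · exact cpl_lv_lt hcard hlen (by omega)
  · omega

include hτ hcard hlen hℓ in
lemma lv_eq_lseq : ∀ (i : ℕ) (hi : i < k),
    leafVec τ hcard ⟨i, hi⟩ = lseq ℓ (bfun k ℓ τ hcard) i := by
  intro i
  induction i with
  | zero => intro hi; exact lv_zero hτ hcard hlen hi
  | succ i ih =>
    intro hi
    have hik : i < k - 1 := by omega
    rw [show lseq ℓ (bfun k ℓ τ hcard) (i+1)
        = nxt ℓ (lseq ℓ (bfun k ℓ τ hcard) i) (bfun k ℓ τ hcard i) from rfl,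
      ← ih (by omega), bfun, dif_pos hik]
    exact lv_succ hτ hcard hlen hi

include hτ hcard hlen hℓ in
lemma leaves_eq :
    leavesOf τ = (Finset.range k).image (lseq ℓ (bfun k ℓ τ hcard)) := by
  apply Finset.Subset.antisymm
  · intro w hw
    obtain ⟨⟨i, hi⟩, rfl⟩ := lv_surj hcard hw
    rw [lv_eq_lseq hτ hcard hlen hℓ i hi]
    exact Finset.mem_image.mpr ⟨i, Finset.mem_range.mpr hi, rfl⟩
  · intro w hw
    obtain ⟨i, hi, rfl⟩ := Finset.mem_image.mp hw
    rw [Finset.mem_range] at hi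
    rw [← lv_eq_lseq hτ hcard hlen hℓ i hi]
    exact lv_mem hcard _

include hτ hcard hlen hℓ in
lemma tree_eq :
    τ = treeOf ((Finset.range k).image (lseq ℓ (bfun k ℓ τ hcard))) := by
  rw [← leaves_eq hτ hcard hlen hℓ]
  exact tree_eq_treeOf_leaves hτ.2.1

end converse2

def extb (k ℓ : ℕ) (b : Fin (k-1) → Fin ℓ) : ℕ → ℕ :=
  fun i => if h : i < k - 1 then (b ⟨i, h⟩ : ℕ) else 0

lemma extb_lt {k ℓ : ℕ} (hℓ : 1 ≤ ℓ) (b : Fin (k-1) → Fin ℓ) : ∀ i, extb k ℓ b i < ℓ := by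
  intro i
  rw [extb]
  split
  · exact (b _).2
  · omega

end UTB

/-- **Coalescent point process encoding of ultrametric trees.** On planar trees with
`k` leaves all at height `ℓ ≥ 1`, the map `τ ↦ (b₁(τ), …, b_{k-1}(τ))` recording the
generations of the MRCAs of consecutive leaves is a bijection onto `{0, …, ℓ-1}^{k-1}`. -/
theorem ultrametric_tree_bijection (k ℓ : ℕ) (hk : 1 ≤ k) (hℓ : 1 ≤ ℓ) :
    ∃ e : {τ : Finset (List ℕ) //
          IsPlanarTree τ ∧ (leavesOf τ).card = k ∧ ∀ v ∈ leavesOf τ, v.length = ℓ} ≃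
        (Fin (k - 1) → Fin ℓ),
      ∀ τ : {τ : Finset (List ℕ) //
          IsPlanarTree τ ∧ (leavesOf τ).card = k ∧ ∀ v ∈ leavesOf τ, v.length = ℓ},
        ∀ i : Fin (k - 1),
          (e τ i : ℕ) =
            commonPrefixLen
              (leafVec τ.1 τ.2.2.1 ⟨i.1, lt_of_lt_of_le i.2 (Nat.sub_le k 1)⟩)
              (leafVec τ.1 τ.2.2.1 ⟨i.1 + 1, by have := i.2; omega⟩) := by

  classical
  refine ⟨⟨fun τ i => ⟨commonPrefixLen
        (leafVec τ.1 τ.2.2.1 ⟨i.1, lt_of_lt_of_le i.2 (Nat.sub_le k 1)⟩)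
        (leafVec τ.1 τ.2.2.1 ⟨i.1 + 1, by have := i.2; omega⟩),
      UTB.cpl_lv_lt τ.2.2.1 τ.2.2.2 (by have := i.2; omega)⟩,
      fun b => ⟨UTB.treeOf ((Finset.range k).image (UTB.lseq ℓ (UTB.extb k ℓ b))),
        UTB.planar_Ltree (UTB.extb_lt hℓ b) hk,
        UTB.card_leaves_Ltree (UTB.extb_lt hℓ b),
        UTB.len_leaves_Ltree (UTB.extb_lt hℓ b)⟩, ?_, ?_⟩, ?_⟩
  · -- left inverse
    intro τ
    apply Subtype.ext
    have hbe : UTB.extb k ℓ (fun i => (⟨commonPrefixLen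
        (leafVec τ.1 τ.2.2.1 ⟨i.1, lt_of_lt_of_le i.2 (Nat.sub_le k 1)⟩)
        (leafVec τ.1 τ.2.2.1 ⟨i.1 + 1, by have := i.2; omega⟩),
      UTB.cpl_lv_lt τ.2.2.1 τ.2.2.2 (by have := i.2; omega)⟩ : Fin ℓ))
        = UTB.bfun k ℓ τ.1 τ.2.2.1 := by
      funext i
      rfl
    show UTB.treeOf _ = τ.1
    rw [hbe]
    exact (UTB.tree_eq τ.2.1 τ.2.2.1 τ.2.2.2 hℓ).symm
  · -- right inverse
    intro b
    funext i
    apply Fin.ext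
    show commonPrefixLen
        (leafVec _ _ ⟨i.1, lt_of_lt_of_le i.2 (Nat.sub_le k 1)⟩)
        (leafVec _ _ ⟨i.1 + 1, _⟩) = (b i : ℕ)
    rw [UTB.leafVec_Ltree (UTB.extb_lt hℓ b), UTB.leafVec_Ltree (UTB.extb_lt hℓ b)]
    show commonPrefixLen (UTB.lseq ℓ (UTB.extb k ℓ b) i.1)
        (UTB.lseq ℓ (UTB.extb k ℓ b) (i.1 + 1)) = (b i : ℕ)
    rw [UTB.cpl_lseq (UTB.extb_lt hℓ b) i.1, UTB.extb, dif_pos i.2]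
  · intro τ i
    rfl


end
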